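/- Let R be a commutative unital reduced ring and let M be a projective R-module. Then M is a reduced R-module. -/
import Mathlib


/-- `M` is `a`-reduced if `a ^ 2 • m = 0` implies `a • m = 0` for all `m : M`. -/
def IsAReduced (R : Type*) [CommRing R] (M : Type*) [AddCommGroup M] [Module R M] (a : R) :
    Prop :=
  ∀ m : M, a ^ 2 • m = 0 → a • m = 0

/-- Every projective module over a commutative unital reduced ring is reduced. -/
theorem projective_module_over_reduced_ring_is_reduced
    (R : Type*) [CommRing R] [IsReduced R]
    (M : Type*) [AddCommGroup M] [Module R M] [Module.Projective R M] :
    ∀ a : R, IsAReduced R M a := by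
  intro a m h
  obtain ⟨s, hs⟩ := (Module.projective_def (R := R) (P := M)).mp ‹_›
  have h2 : a ^ 2 • s m = 0 := by rw [← map_smul, h, map_zero]
  have hsm : a • s m = 0 := by
    ext x
    have hx : a ^ 2 * s m x = 0 := by
      have := congrArg (fun f => f x) h2
      simpa [Finsupp.smul_apply, smul_eq_mul] using this
    have : (a * s m x) ^ 2 = 0 := by rw [mul_pow, show a ^ 2 * s m x ^ 2 = a ^ 2 * s m x * s m x by ring, hx, zero_mul]
    simpa [Finsupp.smul_apply, smul_eq_mul] using IsReduced.eq_zero _ ⟨2, this⟩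
  calc a • m = a • Finsupp.linearCombination R id (s m) := by rw [hs m]
    _ = Finsupp.linearCombination R id (a • s m) := by rw [map_smul]
    _ = 0 := by rw [hsm, map_zero]
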